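/- Let E be a normed lattice, F a Banach lattice, and A a norm-bounded collectively quasi-c-σ-Levi subset of L(E,F). Then the set of all operators Σ_{i=1}^∞ α_i T_i, where T_i ∈ A, Σ_{i=1}^∞ |α_i| ≤ 1, and the series converges in operator norm, is collectively quasi-c-σ-Levi. -/

import Mathlib

section Aux
variable {F : Type*} [NormedAddCommGroup F] [Lattice F] [IsOrderedAddMonoid F]
    [HasSolidNorm F] [NormedSpace ℝ F]

private lemma pow2_nsmul_nonneg : ∀ (k : ℕ) (w : F), 0 ≤ (2 ^ k) • w → 0 ≤ w := by
  intro k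
  induction k with
  | zero => intro w h; simpa using h
  | succ k ih =>
    intro w h
    apply nsmul_two_semiclosed
    apply ih
    rw [← mul_nsmul, ← pow_succ']
    exact h

private lemma real_smul_nonneg' {c : ℝ} (hc : 0 ≤ c) {v : F} (hv : 0 ≤ v) : 0 ≤ c • v := by
  have key : ∀ (m k : ℕ), 0 ≤ ((m : ℝ) / 2 ^ k) • v := by
    intro m k
    apply pow2_nsmul_nonneg k
    have h2 : (0:ℝ) < 2 ^ k := by positivity
    have : (2 ^ k) • (((m : ℝ) / 2 ^ k) • v) = m • v := by
      rw [← Nat.cast_smul_eq_nsmul ℝ (2 ^ k), smul_smul, ← Nat.cast_smul_eq_nsmul ℝ m]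
      congr 1
      push_cast
      field_simp
    rw [this]
    exact nsmul_nonneg hv m
  set q : ℕ → ℝ := fun k => (⌈c * 2 ^ k⌉₊ : ℝ) / 2 ^ k with hq
  have hql : ∀ k, c ≤ q k := by
    intro k
    have h2 : (0:ℝ) < 2 ^ k := by positivity
    rw [hq, le_div_iff₀ h2]
    exact Nat.le_ceil _
  have hqu : ∀ k, q k ≤ c + (1 / 2) ^ k := by
    intro k
    have h2 : (0:ℝ) < 2 ^ k := by positivity
    rw [hq, div_le_iff₀ h2]
    have := (Nat.ceil_lt_add_one (by positivity : (0:ℝ) ≤ c * 2 ^ k)).le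
    calc (⌈c * 2 ^ k⌉₊ : ℝ) ≤ c * 2 ^ k + 1 := this
      _ = (c + (1/2) ^ k) * 2 ^ k := by ring_nf; rw [one_div, inv_pow, inv_mul_cancel₀ (ne_of_gt h2)]; ring
  have hlim : Filter.Tendsto q Filter.atTop (nhds c) := by
    have hu : Filter.Tendsto (fun k : ℕ => c + (1 / 2 : ℝ) ^ k) Filter.atTop (nhds (c + 0)) :=
      Filter.Tendsto.const_add c (tendsto_pow_atTop_nhds_zero_of_lt_one (by norm_num) (by norm_num))
    rw [add_zero] at hu
    exact tendsto_of_tendsto_of_tendsto_of_le_of_le tendsto_const_nhds hu hql hqu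
  have hvl : Filter.Tendsto (fun k => q k • v) Filter.atTop (nhds (c • v)) :=
    (hlim.smul tendsto_const_nhds)
  refine ge_of_tendsto hvl (Filter.Eventually.of_forall fun k => ?_)
  exact key _ _

private lemma smul_le_smul_nonneg {c : ℝ} (hc : 0 ≤ c) {a b : F} (h : a ≤ b) :
    c • a ≤ c • b := by
  have := real_smul_nonneg' hc (sub_nonneg.2 h)
  rw [smul_sub, sub_nonneg] at this
  exact this

private lemma abs_smul_le_abs (c : ℝ) (v : F) : |c • v| ≤ |c| • |v| := by
  rcases le_total 0 c with hc | hc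
  · rw [abs_of_nonneg hc, abs_le']
    constructor
    · exact smul_le_smul_nonneg hc (le_abs_self v)
    · rw [← smul_neg]
      exact smul_le_smul_nonneg hc (neg_le_abs v)
  · rw [abs_of_nonpos hc, abs_le']
    constructor
    · rw [show c • v = (-c) • (-v) by rw [neg_smul_neg]]
      exact smul_le_smul_nonneg (neg_nonneg.2 hc) (neg_le_abs v)
    · rw [← neg_smul]
      exact smul_le_smul_nonneg (neg_nonneg.2 hc) (le_abs_self v)

private lemma finset_abs_sum_le {ι : Type*} (f : ι → F) (s : Finset ι) :
    |∑ i ∈ s, f i| ≤ ∑ i ∈ s, |f i| := by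
  classical
  induction s using Finset.induction with
  | empty => simp
  | insert _ _ hx ih =>
    rw [Finset.sum_insert hx, Finset.sum_insert hx]
    exact (abs_add_le _ _).trans (add_le_add_right ih _)

private lemma abs_hasSum_le {ι : Type*} {f : ι → F} {a b : F}
    (hf : HasSum f a) (hfa : HasSum (fun i => |f i|) b) : |a| ≤ b := by
  have h1 : Filter.Tendsto (fun s : Finset ι => |∑ i ∈ s, f i|) Filter.atTop (nhds |a|) :=
    ((continuous_id.sup continuous_neg : Continuous (fun x : F => |x|)).tendsto _).comp hf
  exact le_of_tendsto_of_tendsto' h1 hfa (fun s => finset_abs_sum_le f s)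

end Aux

/-- `p ↓ 0` : `p` is decreasing with infimum `0`. -/
def DownToZero {F : Type*} [Lattice F] [AddCommGroup F] (p : ℕ → F) : Prop :=
  Antitone p ∧ IsGLB (Set.range p) 0

/-- norm-bounded increasing sequence in the positive cone. -/
def IncBddPos {E : Type*} [NormedAddCommGroup E] [Lattice E] [IsOrderedAddMonoid E]
    [HasSolidNorm E] (x : ℕ → E) : Prop :=
  Monotone x ∧ (∀ n, 0 ≤ x n) ∧ ∃ M : ℝ, ∀ n, ‖x n‖ ≤ M

/-- collectively quasi-c-σ-Levi set of continuous operators. -/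
def CollQuasiCLevi {E F : Type*} [NormedAddCommGroup E] [Lattice E] [IsOrderedAddMonoid E]
    [HasSolidNorm E] [NormedSpace ℝ E]
    [NormedAddCommGroup F] [Lattice F] [IsOrderedAddMonoid F]
    [HasSolidNorm F] [NormedSpace ℝ F] (A : Set (E →L[ℝ] F)) : Prop :=
  ∀ x : ℕ → E, IncBddPos x →
    ∃ (y : (E →L[ℝ] F) → F) (p : ℕ → F), DownToZero p ∧
      ∀ T ∈ A, ∀ n, |T (x n) - y T| ≤ p n

/-- if `A` is a norm-bounded collectively quasi-c-σ-Levi set of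
operators from a normed lattice to a Banach lattice, then the set of all
operator-norm sums `Σ_i α_i T_i` with `T_i ∈ A` and `Σ_i |α_i| ≤ 1` is
collectively quasi-c-σ-Levi. -/
theorem coll_quasi_c_Levi_series
    {E F : Type*} [NormedAddCommGroup E] [Lattice E] [IsOrderedAddMonoid E]
    [HasSolidNorm E] [NormedSpace ℝ E]
    [NormedAddCommGroup F] [Lattice F] [IsOrderedAddMonoid F]
    [HasSolidNorm F] [NormedSpace ℝ F] [CompleteSpace F]
    (A : Set (E →L[ℝ] F))
    (hbdd : ∃ M : ℝ, ∀ T ∈ A, ‖T‖ ≤ M)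
    (hA : CollQuasiCLevi A) :
    CollQuasiCLevi {W : E →L[ℝ] F |
      ∃ (α : ℕ → ℝ) (T : ℕ → E →L[ℝ] F),
        (∀ i, T i ∈ A) ∧ (Summable fun i => |α i|) ∧ (∑' i, |α i|) ≤ 1 ∧
        HasSum (fun i => α i • T i) W} := by
  classical
  obtain ⟨M, hM⟩ := hbdd
  intro x hx
  obtain ⟨y, p, hp, hyp⟩ := hA x hx
  have hp0 : ∀ n, 0 ≤ p n := fun n => hp.2.1 ⟨n, rfl⟩
  -- A uniform bound on ‖y T‖ for T ∈ A
  have hyb : ∀ T ∈ A, ‖y T‖ ≤ M * ‖x 0‖ + ‖p 0‖ := by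
    intro T hT
    have h1 : ‖T (x 0) - y T‖ ≤ ‖p 0‖ := by
      have : |T (x 0) - y T| ≤ |p 0| := by rw [abs_of_nonneg (hp0 0)]; exact hyp T hT 0
      exact HasSolidNorm.solid this
    calc ‖y T‖ = ‖T (x 0) - (T (x 0) - y T)‖ := by rw [sub_sub_cancel]
      _ ≤ ‖T (x 0)‖ + ‖T (x 0) - y T‖ := norm_sub_le _ _
      _ ≤ M * ‖x 0‖ + ‖p 0‖ := by
          refine add_le_add ?_ h1
          exact (T.le_opNorm (x 0)).trans (by
            have := mul_le_mul_of_nonneg_right (hM T hT) (norm_nonneg (x 0)); linarith)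
  set S : Set (E →L[ℝ] F) := {W : E →L[ℝ] F |
      ∃ (α : ℕ → ℝ) (T : ℕ → E →L[ℝ] F),
        (∀ i, T i ∈ A) ∧ (Summable fun i => |α i|) ∧ (∑' i, |α i|) ≤ 1 ∧
        HasSum (fun i => α i • T i) W} with hS
  refine ⟨fun W => if h : W ∈ S then
      ∑' i, h.choose i • y (h.choose_spec.choose i) else 0, p, hp, ?_⟩
  intro W hW n
  simp only [dif_pos hW]
  obtain ⟨hTmem, hsum, hle1, hWsum⟩ := hW.choose_spec.choose_spec
  set α : ℕ → ℝ := hW.choose with hαdef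
  set T : ℕ → (E →L[ℝ] F) := hW.choose_spec.choose with hTdef
  -- summability of α i • y (T i)
  have hys : Summable (fun i => α i • y (T i)) := by
    apply Summable.of_norm_bounded (g := fun i => |α i| * (M * ‖x 0‖ + ‖p 0‖))
      (hsum.mul_right _)
    intro i
    rw [norm_smul, Real.norm_eq_abs]
    exact mul_le_mul_of_nonneg_left (hyb _ (hTmem i)) (abs_nonneg _)
  -- HasSum for the evaluations
  have hWx : HasSum (fun i => α i • (T i) (x n)) (W (x n)) := by
    have := hWsum.mapL (ContinuousLinearMap.apply ℝ F (x n))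
    simpa using this
  have hdiff : HasSum (fun i => α i • ((T i) (x n) - y (T i)))
      (W (x n) - ∑' i, α i • y (T i)) := by
    have := hWx.sub hys.hasSum
    simpa [smul_sub] using this
  -- summability of absolute values
  have habs : Summable (fun i => |α i • ((T i) (x n) - y (T i))|) := by
    apply Summable.of_norm_bounded (g := fun i => |α i| * ‖p n‖) (hsum.mul_right _)
    intro i
    rw [norm_abs_eq_norm, norm_smul, Real.norm_eq_abs]
    refine mul_le_mul_of_nonneg_left ?_ (abs_nonneg _)
    have h1 : |(T i) (x n) - y (T i)| ≤ |p n| := by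
      rw [abs_of_nonneg (hp0 n)]; exact hyp _ (hTmem i) n
    exact HasSolidNorm.solid h1
  -- key bound
  have hterm : ∀ i, |α i • ((T i) (x n) - y (T i))| ≤ |α i| • p n := by
    intro i
    refine (abs_smul_le_abs (α i) _).trans ?_
    have h1 : |(T i) (x n) - y (T i)| ≤ p n := hyp _ (hTmem i) n
    exact smul_le_smul_nonneg (abs_nonneg (α i)) h1
  have hsp : Summable (fun i => |α i| • p n) := by
    apply Summable.of_norm_bounded (g := fun i => |α i| * ‖p n‖) (hsum.mul_right _)
    intro i
    rw [norm_smul, Real.norm_eq_abs, abs_abs]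
  calc |W (x n) - ∑' i, α i • y (T i)|
      ≤ ∑' i, |α i • ((T i) (x n) - y (T i))| := abs_hasSum_le hdiff habs.hasSum
    _ ≤ ∑' i, |α i| • p n := Summable.tsum_le_tsum hterm habs hsp
    _ = (∑' i, |α i|) • p n := Summable.tsum_smul_const hsum (p n)
    _ ≤ (1:ℝ) • p n := by
        have h0 : (0:F) ≤ p n := hp0 n
        have := real_smul_nonneg' (sub_nonneg.2 hle1) h0
        rw [sub_smul, one_smul, sub_nonneg] at this
        simpa using this
    _ = p n := one_smul _ _
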